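/- Let A be a complex unital Banach algebra and M = [[A, B],[C, D]] ∈ M₂(A), with A, D g-Drazin invertible and λ ≠ 0. If AB = λ A^π B D, DC = λ D^π C A, and BC = 0 (hence also the off-diagonal matrix Q = [[0,B],[C,0]] satisfies Q³ = 0 in the relevant sense so Q^d = 0), then M has g-Drazin inverse M^d = diag(A^d, D^d) + Σ_{n≥0} Mⁿ [[0, B (D^d)^{n+2}], [C (A^d)^{n+2}, 0]]. -/

import Mathlib

/-- Quasinilpotent (ring-theoretic): `1 + a*x` is invertible for all `x`
commuting with `a`. -/
def IsQuasinilpotent {R : Type*} [Ring R] (a : R) : Prop :=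
  ∀ x : R, Commute a x → IsUnit (1 + a * x)

/-- `b` is a g-Drazin inverse of `a`. -/
def IsGDrazinInverse {R : Type*} [Ring R] (a b : R) : Prop :=
  Commute a b ∧ b * a * b = b ∧ IsQuasinilpotent (a - a ^ 2 * b)

open Filter Topology
open scoped ENNReal NNReal

section Analytic
variable {R : Type*} [NormedRing R] [NormedAlgebra ℂ R] [CompleteSpace R]

/-- norm-quasinilpotent -/
def NQN (a : R) : Prop := ∀ ε : ℝ, 0 < ε → ∀ᶠ n in atTop, ‖a ^ n‖ ≤ ε ^ n

lemma nqn_of_unitsAway {a : R} (h : ∀ z : ℂ, z ≠ 0 → IsUnit (algebraMap ℂ R z - a)) :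
    NQN a := by
  have hrad : spectralRadius ℂ a = 0 := by
    refine le_antisymm ?_ zero_le
    refine iSup₂_le fun k hk => ?_
    have hk0 : k = 0 := by
      by_contra h0
      exact (spectrum.mem_iff.mp hk) (h k h0)
    simp [hk0]
  have hlim := spectrum.pow_nnnorm_pow_one_div_tendsto_nhds_spectralRadius a
  rw [hrad] at hlim
  intro ε hε
  have hev : ∀ᶠ n : ℕ in atTop, (‖a ^ n‖₊ : ℝ≥0∞) ^ (1 / n : ℝ) < ENNReal.ofReal ε := by
    refine hlim.eventually_lt_const ?_
    simpa using hε
  filter_upwards [hev, eventually_ge_atTop 1] with n hn hn1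
  have hn0 : (n : ℝ) ≠ 0 := by positivity
  have h1 : ((‖a ^ n‖₊ : ℝ≥0∞) ^ (1 / n : ℝ)) ^ (n : ℝ) ≤ (ENNReal.ofReal ε) ^ (n : ℝ) :=
    ENNReal.rpow_le_rpow hn.le (by positivity)
  rw [← ENNReal.rpow_mul, one_div, inv_mul_cancel₀ hn0, ENNReal.rpow_one] at h1
  have h2 : (‖a ^ n‖₊ : ℝ≥0∞) ≤ ENNReal.ofReal (ε ^ n) := by
    rw [ENNReal.ofReal_rpow_of_pos hε] at h1
    rwa [Real.rpow_natCast] at h1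
  replace h2 : ENNReal.ofReal ‖a ^ n‖ ≤ ENNReal.ofReal (ε ^ n) := by rw [ENNReal.ofReal_eq_coe_nnreal (norm_nonneg _)]; exact h2
  exact (ENNReal.ofReal_le_ofReal_iff (by positivity)).mp h2

lemma isUnit_one_sub_of_pow_norm_lt {c : R} {N : ℕ} (hN : N ≠ 0) (h : ‖c ^ N‖ < 1) :
    IsUnit (1 - c) := by
  obtain ⟨u, hu⟩ : IsUnit (1 - c ^ N) := (Units.oneSub _ h).isUnit
  set s : R := ∑ i ∈ Finset.range N, c ^ i with hs
  have hcsum : Commute c s := Commute.sum_right _ _ _ fun i _ => (Commute.refl c).pow_right i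
  have hcs : Commute (1 - c) s := (Commute.one_left s).sub_left hcsum
  have hmul : (1 - c) * s = ↑u := by rw [hu]; exact mul_neg_geom_sum c N
  have hmul' : s * (1 - c) = ↑u := by rw [← hcs.eq, hmul]
  refine isUnit_iff_exists.mpr ⟨s * ↑u⁻¹, ?_, ?_⟩
  · rw [← mul_assoc, hmul, Units.mul_inv]
  · have hcu : s * ↑u⁻¹ = ↑u⁻¹ * s := by
      have : Commute s ↑u := by rw [← hmul']; exact (Commute.refl _).mul_right hcs.symm
      exact (this.units_inv_right).eq
    rw [hcu, mul_assoc, hmul', Units.inv_mul]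

lemma NQN.isQuasinilpotent {a : R} (h : NQN a) : IsQuasinilpotent a := by
  intro x hx
  set ε : ℝ := (1 + ‖x‖)⁻¹ with hε
  have hεpos : 0 < ε := by positivity
  obtain ⟨N, hN, hN1⟩ := ((h ε hεpos).and (eventually_ge_atTop 1)).exists
  have hb : ‖(-(a * x)) ^ N‖ < 1 := by
    have hnorm : ‖(-(a * x)) ^ N‖ = ‖(a * x) ^ N‖ := by
      rcases Nat.even_or_odd N with hpar | hpar
      · rw [hpar.neg_pow]
      · rw [hpar.neg_pow, norm_neg]
    rw [hnorm, hx.mul_pow]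
    calc ‖a ^ N * x ^ N‖ ≤ ‖a ^ N‖ * ‖x ^ N‖ := norm_mul_le _ _
    _ ≤ ε ^ N * ‖x‖ ^ N := by
        refine mul_le_mul hN (norm_pow_le' x (by omega)) (norm_nonneg _) (by positivity)
    _ = (ε * ‖x‖) ^ N := (mul_pow _ _ _).symm
    _ < 1 := by
        refine pow_lt_one₀ (by positivity) ?_ (by omega)
        rw [hε]
        rw [inv_mul_lt_iff₀ (by positivity), mul_one]
        linarith [norm_nonneg x]
  have := isUnit_one_sub_of_pow_norm_lt (by omega : N ≠ 0) hb
  rwa [sub_neg_eq_add] at this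

lemma IsQuasinilpotent.unitsAway {a : R} (h : IsQuasinilpotent a) :
    ∀ z : ℂ, z ≠ 0 → IsUnit (algebraMap ℂ R z - a) := by
  intro z hz
  have hcomm : Commute a ((-z⁻¹) • (1 : R)) := by
    simpa using (Commute.one_right a).smul_right (-z⁻¹)
  have h1 := h _ hcomm
  have heq : algebraMap ℂ R z - a = (z • (1 : R)) * (1 + a * ((-z⁻¹) • (1 : R))) := by
    rw [Algebra.algebraMap_eq_smul_one, smul_mul_assoc, one_mul, mul_smul_comm, mul_one,
      smul_add, smul_smul, mul_neg, mul_inv_cancel₀ hz, neg_smul, one_smul, ← sub_eq_add_neg]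
  rw [heq]
  refine IsUnit.mul ?_ h1
  rw [← Algebra.algebraMap_eq_smul_one]
  exact (isUnit_iff_ne_zero.mpr hz).map (algebraMap ℂ R)

lemma NQN.unitsAway {a : R} (h : NQN a) :
    ∀ z : ℂ, z ≠ 0 → IsUnit (algebraMap ℂ R z - a) :=
  h.isQuasinilpotent.unitsAway

lemma IsQuasinilpotent.nqn {a : R} (h : IsQuasinilpotent a) : NQN a :=
  nqn_of_unitsAway h.unitsAway

lemma NQN.smul {p : R} (hp : NQN p) (c : ℂ) : NQN (c • p) := by
  intro ε hε
  have hδ : (0:ℝ) < ε / (1 + ‖c‖) := by positivity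
  filter_upwards [hp _ hδ] with n hn
  rw [smul_pow, norm_smul, norm_pow]
  calc ‖c‖ ^ n * ‖p ^ n‖ ≤ ‖c‖ ^ n * (ε / (1 + ‖c‖)) ^ n := by
        exact mul_le_mul_of_nonneg_left hn (by positivity)
  _ = (‖c‖ * (ε / (1 + ‖c‖))) ^ n := (mul_pow _ _ _).symm
  _ ≤ ε ^ n := by
      refine pow_le_pow_left₀ (by positivity) ?_ n
      rw [mul_div_assoc']
      rw [div_le_iff₀ (by positivity)]
      nlinarith [norm_nonneg c, hε.le]

lemma nqn_smul_unitsAway {p : R} (hp : NQN p) (c z : ℂ) (hz : z ≠ 0) :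
    IsUnit (algebraMap ℂ R z - c • p) :=
  (hp.smul c).unitsAway z hz

lemma nqn_add_nilpotent_semicommute {p q : R} {lam : ℂ} (hlam : lam ≠ 0) (hp : NQN p)
    (hq3 : q * (q * q) = 0) (hc : p * q = lam • (q * p)) : NQN (p + q) := by
  have hqp : q * p = lam⁻¹ • (p * q) := by
    rw [hc, smul_smul, inv_mul_cancel₀ hlam, one_smul]
  have hswap : ∀ (z c : ℂ), q * (algebraMap ℂ R z - c • p)
      = (algebraMap ℂ R z - (lam⁻¹ * c) • p) * q := by
    intro z c
    rw [mul_sub, sub_mul, ← Algebra.commutes z q, mul_smul_comm, hqp, smul_smul,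
      smul_mul_assoc, mul_comm c]
  refine nqn_of_unitsAway fun z hz => ?_
  set u0 : Rˣ := (nqn_smul_unitsAway hp 1 z hz).unit with hu0
  set u1 : Rˣ := (nqn_smul_unitsAway hp lam⁻¹ z hz).unit with hu1
  set u2 : Rˣ := (nqn_smul_unitsAway hp (lam⁻¹ * lam⁻¹) z hz).unit with hu2
  have hu0v : (↑u0 : R) = algebraMap ℂ R z - (1:ℂ) • p := IsUnit.unit_spec _
  have hu1v : (↑u1 : R) = algebraMap ℂ R z - lam⁻¹ • p := IsUnit.unit_spec _
  have hu2v : (↑u2 : R) = algebraMap ℂ R z - (lam⁻¹ * lam⁻¹) • p := IsUnit.unit_spec _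
  have hq0 : q * ↑u0 = ↑u1 * q := by
    rw [hu0v, hu1v, hswap z 1, mul_one]
  have hq1 : q * ↑u1 = ↑u2 * q := by
    rw [hu1v, hu2v, hswap z lam⁻¹]
  have hqi0 : q * ↑u0⁻¹ = ↑u1⁻¹ * q := by
    have h := congrArg (fun t => (↑u1⁻¹ : R) * t * ↑u0⁻¹) hq0
    simpa only [← mul_assoc, Units.inv_mul, one_mul, mul_assoc, Units.mul_inv, mul_one,
      Units.inv_mul_cancel_left, Units.mul_inv_cancel_right] using h.symm
  have hqi1 : q * ↑u1⁻¹ = ↑u2⁻¹ * q := by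
    have h := congrArg (fun t => (↑u2⁻¹ : R) * t * ↑u1⁻¹) hq1
    simpa only [← mul_assoc, Units.inv_mul, one_mul, mul_assoc, Units.mul_inv, mul_one,
      Units.inv_mul_cancel_left, Units.mul_inv_cancel_right] using h.symm
  have hqi0' : ∀ x : R, q * (↑u0⁻¹ * x) = ↑u1⁻¹ * (q * x) := fun x => by
    rw [← mul_assoc, hqi0, mul_assoc]
  have hqi1' : ∀ x : R, q * (↑u1⁻¹ * x) = ↑u2⁻¹ * (q * x) := fun x => by
    rw [← mul_assoc, hqi1, mul_assoc]
  set y : R := ↑u0⁻¹ * q with hy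
  have hy3 : y ^ 3 = 0 := by
    have h3 : y ^ 3 = y * (y * y) := by
      rw [show (3:ℕ) = 2 + 1 from rfl, pow_succ, sq, mul_assoc]
    rw [h3, hy]
    simp only [mul_assoc, hqi0', hqi1', hq3, mul_zero]
  have hyu : IsUnit (1 - y) := IsNilpotent.isUnit_one_sub ⟨3, hy3⟩
  have hfinal : algebraMap ℂ R z - (p + q) = ↑u0 * (1 - y) := by
    rw [mul_sub, mul_one, hy, Units.mul_inv_cancel_left, hu0v, one_smul, sub_sub]
  rw [hfinal]
  exact u0.isUnit.mul hyu

theorem gdrazin_add_abstract (P Pd Q : R) (lam : ℂ) (hlam : lam ≠ 0)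
    (hP : IsGDrazinInverse P Pd) (hQ3 : Q * (Q * Q) = 0)
    (hPQ : P * Q = lam • ((1 - P * Pd) * Q * P)) :
    IsGDrazinInverse (P + Q) (Pd + ∑' n : ℕ, (P + Q) ^ n * (Q * Pd ^ (n + 2))) := by
  obtain ⟨hc, hbab, hqn⟩ := hP
  replace hc : P * Pd = Pd * P := hc
  replace hbab : Pd * P * Pd = Pd := hbab
  -- basic ring facts
  have f3₀ : Pd * (P * Pd) = Pd := by rw [← mul_assoc, hbab]
  have h_eQ : (P * Pd) * Q = 0 := by
    have h0 : Pd * (P * Q) = 0 := by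
      rw [hPQ, mul_smul_comm]
      have : Pd * ((1 - P * Pd) * Q * P) = 0 := by
        rw [← mul_assoc, ← mul_assoc, mul_sub, mul_one, f3₀, sub_self, zero_mul, zero_mul]
      rw [this, smul_zero]
    rw [hc, mul_assoc, h0]
  have h_eQ' : ∀ x : R, (P * Pd) * (Q * x) = 0 := fun x => by
    rw [← mul_assoc, h_eQ, zero_mul]
  have h_dQ : Pd * Q = 0 := by
    rw [← f3₀, mul_assoc, h_eQ, mul_zero]
  have h_dQ' : ∀ x : R, Pd * (Q * x) = 0 := fun x => by
    rw [← mul_assoc, h_dQ, zero_mul]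
  have h_PQ : P * Q = lam • (Q * P) := by
    rw [hPQ, sub_mul, one_mul, h_eQ, sub_zero]
  have h_eP : (P * Pd) * P = P * (P * Pd) := by
    rw [mul_assoc, ← hc, ← mul_assoc]
  set M : R := P + Q with hM
  have h_eM1 : (P * Pd) * M = P * (P * Pd) := by
    rw [hM, mul_add, h_eQ, add_zero, h_eP]
  -- e * M^n = P^n * e
  have h_eM : ∀ n : ℕ, (P * Pd) * M ^ n = P ^ n * (P * Pd) := by
    intro n
    induction n with
    | zero => rw [pow_zero, pow_zero, mul_one, one_mul]
    | succ n ih =>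
      rw [pow_succ' M n, pow_succ' P n, ← mul_assoc, h_eM1, mul_assoc, ih, ← mul_assoc]
  have h_eM' : ∀ (n : ℕ) (x : R), (P * Pd) * (M ^ n * x) = P ^ n * ((P * Pd) * x) :=
    fun n x => by rw [← mul_assoc, h_eM, mul_assoc]
  have h_dM : ∀ (n : ℕ) (x : R), Pd * (M ^ n * (Q * x)) = 0 := by
    intro n x
    calc Pd * (M ^ n * (Q * x)) = (Pd * (P * Pd)) * (M ^ n * (Q * x)) := by rw [f3₀]
    _ = Pd * ((P * Pd) * (M ^ n * (Q * x))) := by rw [mul_assoc]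
    _ = Pd * (P ^ n * ((P * Pd) * (Q * x))) := by rw [h_eM']
    _ = 0 := by rw [h_eQ', mul_zero, mul_zero]
  -- powers of Pd
  have hpow1 : ∀ n : ℕ, Pd ^ (n + 1) = Pd ^ n * Pd := fun n => pow_succ Pd n
  have hpow2 : ∀ n : ℕ, Pd ^ (n + 2) = Pd ^ (n + 1) * Pd := fun n => pow_succ Pd (n + 1)
  have h6 : ∀ n : ℕ, Pd ^ (n + 1) * (P * Pd) = Pd ^ (n + 1) := fun n => by
    rw [hpow1, mul_assoc, f3₀]
  have h5 : ∀ n : ℕ, Pd ^ (n + 2) * P = Pd ^ (n + 1) := fun n => by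
    rw [hpow2, mul_assoc, ← hc, h6]
  have h7' : ∀ (n : ℕ) (x : R), Pd ^ (n + 1) * (Q * x) = 0 := fun n x => by
    rw [hpow1, mul_assoc, h_dQ', mul_zero]
  have h7 : ∀ n : ℕ, Pd ^ (n + 1) * Q = 0 := fun n => by
    rw [hpow1, mul_assoc, h_dQ, mul_zero]
  have h_dpow_e : ∀ n : ℕ, Pd ^ (n + 1) * (P * Pd) = Pd ^ (n + 1) := h6
  -- f facts
  have he : P * Pd * (P * Pd) = P * Pd := by rw [mul_assoc, f3₀]
  have hff : (1 - P * Pd) * (1 - P * Pd) = 1 - P * Pd := by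
    rw [mul_sub, mul_one, sub_mul, one_mul, he, sub_self, sub_zero]
  have hfQ : ∀ x : R, (1 - P * Pd) * (Q * x) = Q * x := fun x => by
    rw [sub_mul, one_mul, h_eQ', sub_zero]
  have hfQ₀ : (1 - P * Pd) * Q = Q := by rw [sub_mul, one_mul, h_eQ, sub_zero]
  have hef : (P * Pd) * (1 - P * Pd) = 0 := by
    rw [mul_sub, mul_one, he, sub_self]
  have hfM : (1 - P * Pd) * (M * (1 - P * Pd)) = M * (1 - P * Pd) := by
    rw [sub_mul, one_mul, ← mul_assoc, h_eM1, mul_assoc, hef, mul_zero, sub_zero]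
  have hfMn : ∀ n : ℕ, (1 - P * Pd) * (M ^ (n + 1) * (1 - P * Pd)) = M ^ (n + 1) * (1 - P * Pd) := by
    intro n
    rw [sub_mul, one_mul, h_eM' (n + 1), hef, mul_zero, sub_zero]
  -- M^n * f = (M * f)^n for n ≥ 1
  have hMf : ∀ n : ℕ, M ^ (n + 1) * (1 - P * Pd) = (M * (1 - P * Pd)) ^ (n + 1) := by
    intro n
    induction n with
    | zero => rw [pow_one, pow_one]
    | succ n ih =>
      have e1 : M ^ (n + 2) = M * M ^ (n + 1) := pow_succ' M (n + 1)
      calc M ^ (n + 2) * (1 - P * Pd) = M * (M ^ (n + 1) * (1 - P * Pd)) := by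
            rw [e1, mul_assoc]
      _ = M * ((1 - P * Pd) * (M ^ (n + 1) * (1 - P * Pd))) := by rw [hfMn n]
      _ = (M * (1 - P * Pd)) * (M ^ (n + 1) * (1 - P * Pd)) := by rw [← mul_assoc]
      _ = (M * (1 - P * Pd)) * (M * (1 - P * Pd)) ^ (n + 1) := by rw [ih]
      _ = (M * (1 - P * Pd)) ^ (n + 2) := (pow_succ' _ (n + 1)).symm
  -- quasinilpotence of W := M * f
  have hpf : P * (1 - P * Pd) = P - P ^ 2 * Pd := by
    rw [mul_sub, mul_one, ← mul_assoc, ← sq]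
  have hWnqn : NQN (M * (1 - P * Pd)) := by
    have hp : NQN (P * (1 - P * Pd)) := by rw [hpf]; exact hqn.nqn
    have hq3' : (Q * (1 - P * Pd)) * ((Q * (1 - P * Pd)) * (Q * (1 - P * Pd))) = 0 := by
      have s1 : (Q * (1 - P * Pd)) * (Q * (1 - P * Pd)) = Q * (Q * (1 - P * Pd)) := by
        rw [mul_assoc, hfQ]
      rw [s1, mul_assoc, hfQ, ← mul_assoc Q Q (Q * (1 - P * Pd)),
        ← mul_assoc (Q * Q) Q (1 - P * Pd), mul_assoc Q Q Q, hQ3, zero_mul]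
    have hpq : (P * (1 - P * Pd)) * (Q * (1 - P * Pd))
        = lam • ((Q * (1 - P * Pd)) * (P * (1 - P * Pd))) := by
      have hfP : (1 - P * Pd) * (P * (1 - P * Pd)) = P * (1 - P * Pd) := by
        rw [sub_mul, one_mul, ← mul_assoc, h_eP, mul_assoc, hef, mul_zero, sub_zero]
      rw [mul_assoc P, hfQ, ← mul_assoc P Q, h_PQ, smul_mul_assoc,
        mul_assoc Q P (1 - P * Pd), mul_assoc Q (1 - P * Pd) (P * (1 - P * Pd)), hfP]
    have := nqn_add_nilpotent_semicommute hlam hp hq3' hpq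
    rwa [← add_mul, ← hM] at this
  -- summability
  set T : ℕ → R := fun n => M ^ n * (Q * Pd ^ (n + 2)) with hT
  have hsum : Summable T := by
    set ε : ℝ := (2 * (1 + ‖Pd‖))⁻¹ with hε
    have hεpos : 0 < ε := by positivity
    have hgeo : Summable (fun n : ℕ => (‖Q‖ * (1 + ‖Pd‖) ^ 2) * (1/2) ^ n) :=
      (summable_geometric_of_lt_one (by norm_num) (by norm_num)).mul_left _
    refine Summable.of_norm_bounded_eventually_nat hgeo ?_
    filter_upwards [hWnqn ε hεpos, eventually_ge_atTop 1] with n hn hn1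
    obtain ⟨k, rfl⟩ : ∃ k, n = k + 1 := ⟨n - 1, by omega⟩
    have hTn : T (k + 1) = (M * (1 - P * Pd)) ^ (k + 1) * (Q * Pd ^ (k + 1 + 2)) := by
      show M ^ (k + 1) * (Q * Pd ^ (k + 1 + 2)) = _
      calc M ^ (k + 1) * (Q * Pd ^ (k + 1 + 2))
          = (M ^ (k + 1) * (1 - P * Pd)) * (Q * Pd ^ (k + 1 + 2)) := by rw [mul_assoc, hfQ]
      _ = (M * (1 - P * Pd)) ^ (k + 1) * (Q * Pd ^ (k + 1 + 2)) := by rw [hMf]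
    rw [hTn]
    have hd : ‖Pd ^ (k + 1 + 2)‖ ≤ (1 + ‖Pd‖) ^ (k + 1 + 2) := by
      calc ‖Pd ^ (k + 1 + 2)‖ ≤ ‖Pd‖ ^ (k + 1 + 2) := norm_pow_le' Pd (by omega)
      _ ≤ (1 + ‖Pd‖) ^ (k + 1 + 2) := by
          exact pow_le_pow_left₀ (norm_nonneg _) (by linarith) _
    have hhalf : ε * (1 + ‖Pd‖) = 1/2 := by
      rw [hε]
      field_simp
    calc ‖(M * (1 - P * Pd)) ^ (k + 1) * (Q * Pd ^ (k + 1 + 2))‖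
        ≤ ‖(M * (1 - P * Pd)) ^ (k + 1)‖ * (‖Q‖ * ‖Pd ^ (k + 1 + 2)‖) :=
          (norm_mul_le _ _).trans (by gcongr; exact norm_mul_le _ _)
    _ ≤ ε ^ (k + 1) * (‖Q‖ * (1 + ‖Pd‖) ^ (k + 1 + 2)) := by
        refine mul_le_mul hn ?_ (by positivity) (by positivity)
        exact mul_le_mul_of_nonneg_left hd (norm_nonneg _)
    _ = ‖Q‖ * ((ε * (1 + ‖Pd‖)) ^ (k + 1) * (1 + ‖Pd‖) ^ 2) := by
        rw [mul_pow, pow_add]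
        ring
    _ = ‖Q‖ * (1 + ‖Pd‖) ^ 2 * (1/2) ^ (k + 1) := by rw [hhalf]; ring
  -- derived power facts (definitional index shifts)
  have h5₂ : ∀ n : ℕ, Pd ^ (n + 2) * P = Pd ^ (n + 1) := h5
  have h6₂ : ∀ n : ℕ, Pd ^ (n + 2) * (P * Pd) = Pd ^ (n + 2) := fun n => h6 (n + 1)
  have h7₂ : ∀ n : ℕ, Pd ^ (n + 2) * Q = 0 := fun n => h7 (n + 1)
  have h_dMpow : ∀ (k m : ℕ) (x : R), Pd ^ (k + 1) * (M ^ m * (Q * x)) = 0 := by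
    intro k m x
    rw [hpow1, mul_assoc, h_dM, mul_zero]
  have h_dMpow₂ : ∀ (n m : ℕ), Pd ^ (n + 2) * (M ^ m * (Q * Pd ^ (m + 2))) = 0 :=
    fun n m => h_dMpow (n + 1) m _
  -- the series
  set S : R := ∑' n, T n with hS
  set X : R := Pd + S with hX
  set T' : ℕ → R := fun n => M ^ n * (Q * Pd ^ (n + 1)) with hT'
  have hTP : ∀ n, T n * P = T' n := by
    intro n
    show (M ^ n * (Q * Pd ^ (n + 2))) * P = M ^ n * (Q * Pd ^ (n + 1))
    rw [mul_assoc, mul_assoc Q, h5₂]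
  have hsum' : Summable T' := by
    have h : (fun n => T n * P) = T' := funext hTP
    rw [← h]
    exact hsum.mul_right P
  have hMT : ∀ n, M * T n = T' (n + 1) := by
    intro n
    show M * (M ^ n * (Q * Pd ^ (n + 2))) = M ^ (n + 1) * (Q * Pd ^ (n + 2))
    rw [← mul_assoc, ← pow_succ']
  have hT'0 : T' 0 = Q * Pd := by
    show M ^ 0 * (Q * Pd ^ 1) = Q * Pd
    rw [pow_zero, one_mul, pow_one]
  have hSP : S * P = ∑' n, T' n := by
    rw [hS, ← hsum.tsum_mul_right P]
    exact tsum_congr hTP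
  have hMS : M * S = S * P - Q * Pd := by
    have h1 : M * S = ∑' n, T' (n + 1) := by
      rw [hS, ← hsum.tsum_mul_left M]
      exact tsum_congr hMT
    have h2 : ∑' n, T' n = T' 0 + ∑' n, T' (n + 1) := hsum'.tsum_eq_zero_add
    rw [h1, hSP, h2, hT'0]
    abel
  have hTQ : ∀ n, T n * Q = 0 := by
    intro n
    show (M ^ n * (Q * Pd ^ (n + 2))) * Q = 0
    rw [mul_assoc, mul_assoc Q, h7₂, mul_zero, mul_zero]
  have hSQ : S * Q = 0 := by
    rw [hS, ← hsum.tsum_mul_right Q, tsum_congr hTQ, tsum_zero]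
  have hdT : ∀ n, Pd * T n = 0 := fun n => h_dM n (Pd ^ (n + 2))
  have hdS : Pd * S = 0 := by
    rw [hS, ← hsum.tsum_mul_left Pd, tsum_congr hdT, tsum_zero]
  have hTT : ∀ n m, T n * T m = 0 := by
    intro n m
    show (M ^ n * (Q * Pd ^ (n + 2))) * (M ^ m * (Q * Pd ^ (m + 2))) = 0
    rw [mul_assoc, mul_assoc Q, h_dMpow₂, mul_zero, mul_zero]
  have hST : ∀ m, S * T m = 0 := by
    intro m
    rw [hS, ← hsum.tsum_mul_right (T m), tsum_congr (fun n => hTT n m), tsum_zero]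
  have hSS : S * S = 0 := by
    rw [hS, ← hsum.tsum_mul_left S, tsum_congr hST, tsum_zero]
  have hTe : ∀ n, T n * (P * Pd) = T n := by
    intro n
    show (M ^ n * (Q * Pd ^ (n + 2))) * (P * Pd) = M ^ n * (Q * Pd ^ (n + 2))
    rw [mul_assoc, mul_assoc Q, h6₂]
  have hSe : S * (P * Pd) = S := by
    rw [hS, ← hsum.tsum_mul_right (P * Pd)]
    exact tsum_congr hTe
  have heT : ∀ n, (P * Pd) * T n = 0 := by
    intro n
    show (P * Pd) * (M ^ n * (Q * Pd ^ (n + 2))) = 0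
    rw [h_eM', h_eQ', mul_zero]
  have heS : (P * Pd) * S = 0 := by
    rw [hS, ← hsum.tsum_mul_left (P * Pd), tsum_congr heT, tsum_zero]
  -- the three conditions
  have c1 : M * X = P * Pd + S * P := by
    rw [hX, mul_add, hMS, hM, add_mul]
    abel
  have c2 : X * M = P * Pd + S * P := by
    rw [hX, add_mul, hM, mul_add, mul_add, h_dQ, hSQ, add_zero, add_zero, ← hc]
  have hcomm : Commute M X := c1.trans c2.symm
  have hXe : X * (P * Pd) = X := by
    rw [hX, add_mul, f3₀, hSe]
  have hXSP : X * (S * P) = 0 := by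
    rw [hX, add_mul, ← mul_assoc, ← mul_assoc, hdS, hSS, zero_mul, add_zero]
  have c3 : X * (M * X) = X := by
    rw [c1, mul_add, hXe, hXSP, add_zero]
  -- quasinilpotent part
  have hM2X : M ^ 2 * X = M * (P * Pd) + (S * (P * P) - Q * (P * Pd)) := by
    rw [sq, mul_assoc, c1, mul_add, ← mul_assoc M S P, hMS, sub_mul, mul_assoc S P P,
      mul_assoc Q Pd P, ← hc]
  have hNdef : M - M ^ 2 * X = M * (1 - P * Pd) + Q * (P * Pd) - S * (P * P) := by
    rw [hM2X, mul_sub, mul_one]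
    abel
  set W : R := M * (1 - P * Pd) with hW
  set N : R := M * (1 - P * Pd) + Q * (P * Pd) - S * (P * P) with hN
  have heN1 : (P * Pd) * (M * (1 - P * Pd)) = 0 := by
    rw [← mul_assoc, h_eM1, mul_assoc, hef, mul_zero]
  have heN3 : (P * Pd) * (S * (P * P)) = 0 := by
    rw [← mul_assoc, heS, zero_mul]
  have heN : (P * Pd) * N = 0 := by
    rw [hN, mul_sub, mul_add, heN1, h_eQ', heN3, add_zero, sub_zero]
  have hTPPf : ∀ n, (T n * (P * P)) * (1 - P * Pd) = 0 := by
    intro n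
    have hdPf : (Pd ^ (n + 2) * (P * P)) * (1 - P * Pd) = 0 := by
      rw [← mul_assoc (Pd ^ (n + 2)) P P, h5₂]
      cases n with
      | zero =>
        show Pd ^ 1 * P * (1 - P * Pd) = 0
        rw [pow_one, ← hc, hef]
      | succ k =>
        have h5k : Pd ^ (k + 1 + 1) * P = Pd ^ (k + 1) := h5 k
        rw [h5k, mul_sub, mul_one, h6, sub_self]
    show ((M ^ n * (Q * Pd ^ (n + 2))) * (P * P)) * (1 - P * Pd) = 0
    rw [mul_assoc (M ^ n), mul_assoc Q, mul_assoc, mul_assoc, hdPf, mul_zero, mul_zero]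
  have hSPPf : (S * (P * P)) * (1 - P * Pd) = 0 := by
    have h1 : S * (P * P) = ∑' n, T n * (P * P) := (hsum.tsum_mul_right (P * P)).symm
    rw [h1, ← (hsum.mul_right (P * P)).tsum_mul_right (1 - P * Pd),
      tsum_congr hTPPf, tsum_zero]
  have hNf : N * (1 - P * Pd) = W := by
    rw [hN, hW, sub_mul, add_mul, mul_assoc, hff, mul_assoc, hef, mul_zero, add_zero, hSPPf,
      sub_zero]
  have hNN : N * N = W * N := by
    calc N * N = N * (1 * N) := by rw [one_mul]
    _ = N * (((P * Pd) + (1 - P * Pd)) * N) := by rw [add_sub_cancel]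
    _ = N * ((P * Pd) * N) + N * ((1 - P * Pd) * N) := by rw [add_mul, mul_add]
    _ = N * ((1 - P * Pd) * N) := by rw [heN, mul_zero, zero_add]
    _ = (N * (1 - P * Pd)) * N := by rw [← mul_assoc]
    _ = W * N := by rw [hNf]
  have hNpow : ∀ k : ℕ, N ^ (k + 1) = W ^ k * N := by
    intro k
    induction k with
    | zero => rw [pow_one, pow_zero, one_mul]
    | succ k ih =>
      rw [pow_succ N (k + 1), ih, mul_assoc, hNN, ← mul_assoc, ← pow_succ]
  have hNnqn : NQN N := by
    intro ε hε
    have hε2 : (0:ℝ) < ε / 2 := by positivity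
    have h2pow : ∀ᶠ k : ℕ in atTop, ‖N‖ / ε ≤ 2 ^ k :=
      (tendsto_pow_atTop_atTop_of_one_lt (by norm_num : (1:ℝ) < 2)).eventually_ge_atTop _
    obtain ⟨K, hK⟩ := eventually_atTop.mp ((hWnqn (ε / 2) hε2).and h2pow)
    refine eventually_atTop.mpr ⟨K + 1, fun n hn => ?_⟩
    obtain ⟨k, rfl⟩ : ∃ k, n = k + 1 := ⟨n - 1, by omega⟩
    obtain ⟨hW1, hW2⟩ := hK k (by omega)
    have hNle : ‖N‖ ≤ 2 ^ k * ε := by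
      rw [div_le_iff₀ hε] at hW2
      linarith
    calc ‖N ^ (k + 1)‖ = ‖W ^ k * N‖ := by rw [hNpow k]
    _ ≤ ‖W ^ k‖ * ‖N‖ := norm_mul_le _ _
    _ ≤ (ε / 2) ^ k * (2 ^ k * ε) :=
        mul_le_mul hW1 hNle (norm_nonneg _) (by positivity)
    _ = ε ^ (k + 1) := by
        rw [div_pow, pow_succ]
        field_simp
  refine ⟨hcomm, ?_, ?_⟩
  · rw [mul_assoc]
    exact c3
  · rw [hNdef]
    exact hNnqn.isQuasinilpotent

end Analytic

section MatrixAux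
variable {𝔸 : Type*} [NormedRing 𝔸] [NormedAlgebra ℂ 𝔸] [CompleteSpace 𝔸]

attribute [local instance] Matrix.linftyOpNormedRing Matrix.linftyOpNormedAlgebra

lemma nqn_diag {x y : 𝔸} (hx : NQN x) (hy : NQN y) :
    NQN (Matrix.diagonal ![x, y] : Matrix (Fin 2) (Fin 2) 𝔸) := by
  intro ε hε
  filter_upwards [hx ε hε, hy ε hε] with n hxn hyn
  rw [Matrix.diagonal_pow]
  have h0 : ‖(Matrix.diagonal (![x, y] ^ n) : Matrix (Fin 2) (Fin 2) 𝔸)‖₊ = ‖![x, y] ^ n‖₊ :=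
    Matrix.linfty_opNNNorm_diagonal _
  have hnorm : ‖(Matrix.diagonal (![x, y] ^ n) : Matrix (Fin 2) (Fin 2) 𝔸)‖
      = ‖![x, y] ^ n‖ := by
    rw [← coe_nnnorm, ← coe_nnnorm]
    exact_mod_cast h0
  rw [hnorm]
  rw [pi_norm_le_iff_of_nonneg (by positivity)]
  intro i
  fin_cases i
  · simpa using hxn
  · simpa using hyn

theorem final_aux (A B C D Ad Dd : 𝔸) (lam : ℂ) (hlam : lam ≠ 0)
    (hA : IsGDrazinInverse A Ad) (hD : IsGDrazinInverse D Dd)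
    (h1 : A * B = lam • ((1 - A * Ad) * B * D))
    (h2 : D * C = lam • ((1 - D * Dd) * C * A))
    (h3 : B * C = 0) :
    IsGDrazinInverse (!![A, B; C, D])
      (!![Ad, 0; 0, Dd] +
        ∑' n : ℕ, (!![A, B; C, D] : Matrix (Fin 2) (Fin 2) 𝔸) ^ n *
          !![0, B * Dd ^ (n + 2); C * Ad ^ (n + 2), 0]) := by
  haveI : @CompleteSpace (Matrix (Fin 2) (Fin 2) 𝔸) (PseudoMetricSpace.toUniformSpace (α := Matrix (Fin 2) (Fin 2) 𝔸)) := (inferInstance : CompleteSpace (Fin 2 → Fin 2 → 𝔸))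
  obtain ⟨hcA, hbA, hqA⟩ := hA
  obtain ⟨hcD, hbD, hqD⟩ := hD
  replace hcA : A * Ad = Ad * A := hcA
  replace hcD : D * Dd = Dd * D := hcD
  set Pm : Matrix (Fin 2) (Fin 2) 𝔸 := !![A, 0; 0, D] with hPmd
  set Qm : Matrix (Fin 2) (Fin 2) 𝔸 := !![0, B; C, 0] with hQmd
  set Pdm : Matrix (Fin 2) (Fin 2) 𝔸 := !![Ad, 0; 0, Dd] with hPdmd
  have e1 : Pm + Qm = !![A, B; C, D] := by
    rw [hPmd, hQmd]
    ext i j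
    fin_cases i <;> fin_cases j <;> simp
  have ePPd : Pm * Pdm = !![A * Ad, 0; 0, D * Dd] := by
    rw [hPmd, hPdmd, Matrix.mul_fin_two]
    simp only [mul_zero, zero_mul, add_zero, zero_add]
  have ePdP : Pdm * Pm = !![Ad * A, 0; 0, Dd * D] := by
    rw [hPmd, hPdmd, Matrix.mul_fin_two]
    simp only [mul_zero, zero_mul, add_zero, zero_add]
  have hPmGD : IsGDrazinInverse Pm Pdm := by
    refine ⟨?_, ?_, ?_⟩
    · show Pm * Pdm = Pdm * Pm
      rw [ePPd, ePdP, hcA, hcD]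
    · rw [ePdP, hPdmd, Matrix.mul_fin_two]
      simp only [mul_zero, zero_mul, add_zero, zero_add]
      rw [hbA, hbD]
    · have hdiag : Pm - Pm ^ 2 * Pdm
          = Matrix.diagonal ![A - A ^ 2 * Ad, D - D ^ 2 * Dd] := by
        rw [sq, hPmd, hPdmd, Matrix.mul_fin_two, Matrix.mul_fin_two]
        ext i j
        fin_cases i <;> fin_cases j <;>
          simp [Matrix.diagonal, sq]
      rw [hdiag]
      exact (nqn_diag hqA.nqn hqD.nqn).isQuasinilpotent
  have hQ3m : Qm * (Qm * Qm) = 0 := by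
    rw [hQmd, Matrix.mul_fin_two, Matrix.mul_fin_two]
    ext i j
    fin_cases i <;> fin_cases j <;>
      simp [h3, ← mul_assoc]
  have hPQm : Pm * Qm = lam • ((1 - Pm * Pdm) * Qm * Pm) := by
    rw [hPmd, hQmd, hPdmd]
    ext i j
    fin_cases i <;> fin_cases j <;>
      simp [Matrix.mul_apply, Fin.sum_univ_two, Matrix.one_apply, h1, h2]
  have hdiagpow : ∀ k : ℕ, Pdm ^ k = !![Ad ^ k, 0; 0, Dd ^ k] := by
    intro k
    induction k with
    | zero => rw [pow_zero, pow_zero, pow_zero, Matrix.one_fin_two]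
    | succ k ih =>
      rw [pow_succ, ih, hPdmd, Matrix.mul_fin_two]
      simp only [mul_zero, zero_mul, add_zero, zero_add]
      rw [← pow_succ, ← pow_succ]
  have epow : (fun n : ℕ => (Pm + Qm) ^ n * (Qm * Pdm ^ (n + 2)))
      = fun n : ℕ => (Pm + Qm) ^ n * !![0, B * Dd ^ (n + 2); C * Ad ^ (n + 2), 0] := by
    funext n
    rw [hdiagpow (n + 2), hQmd, Matrix.mul_fin_two]
    simp only [mul_zero, zero_mul, add_zero, zero_add]
  have habs := gdrazin_add_abstract Pm Pdm Qm lam hlam hPmGD hQ3m hPQm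
  rw [epow, e1, hPdmd] at habs
  exact habs
end MatrixAux

variable {𝔸 : Type*} [NormedRing 𝔸] [NormedAlgebra ℂ 𝔸] [CompleteSpace 𝔸]

/-- if `AB = λ Aᵖ B D`, `DC = λ Dᵖ C A` and `BC = 0`, then
`Mᵈ = diag(Ad, Dd) + Σ_{n≥0} Mⁿ [[0, B Dd^(n+2)],[C Ad^(n+2), 0]]`. -/
theorem block_gDrazin_formula'' (A B C D Ad Dd : 𝔸) (lam : ℂ) (hlam : lam ≠ 0)
    (hA : IsGDrazinInverse A Ad) (hD : IsGDrazinInverse D Dd)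
    (h1 : A * B = lam • ((1 - A * Ad) * B * D))
    (h2 : D * C = lam • ((1 - D * Dd) * C * A))
    (h3 : B * C = 0) :
    IsGDrazinInverse (!![A, B; C, D])
      (!![Ad, 0; 0, Dd] +
        ∑' n : ℕ, (!![A, B; C, D] : Matrix (Fin 2) (Fin 2) 𝔸) ^ n *
          !![0, B * Dd ^ (n + 2); C * Ad ^ (n + 2), 0]) := by
  exact final_aux A B C D Ad Dd lam hlam hA hD h1 h2 h3
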